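/- For α > 2, s > 0, P > 0, the improper integral ∫₀^∞ 2π r / (1 + r^α/(s P)) dr equals π (s P)^{2/α} / sinc(2/α), where sinc(x) = sin(π x)/(π x). -/

import Mathlib

open MeasureTheory Real Set

noncomputable section

/-- `sinc x = sin (π x) / (π x)`. -/
def rsinc (x : ℝ) : ℝ := Real.sin (π * x) / (π * x)

/-- Real Beta-type value: `∫ x in 0..1, x^(a-1) (1-x)^(-a) = π / sin (π a)`. -/
lemma real_beta_val (a : ℝ) (h0 : 0 < a) (h1 : a < 1) :
    ∫ x in (0:ℝ)..1, x ^ (a-1) * (1-x) ^ (-a) = π / Real.sin (π * a) := by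
  have key : Complex.betaIntegral a (1 - a) =
      ((∫ x in (0:ℝ)..1, x ^ (a-1) * (1-x) ^ (-a) : ℝ) : ℂ) := by
    rw [Complex.betaIntegral, ← intervalIntegral.integral_ofReal]
    refine intervalIntegral.integral_congr fun x hx => ?_
    rw [uIcc_of_le (by norm_num)] at hx
    obtain ⟨hx0, hx1⟩ := hx
    have e1 : ((a : ℂ) - 1) = ((a - 1 : ℝ) : ℂ) := by push_cast; ring
    have e2 : ((1 : ℂ) - a - 1) = ((-a : ℝ) : ℂ) := by push_cast; ring
    have e3 : ((1 : ℂ) - x) = ((1 - x : ℝ) : ℂ) := by push_cast; ring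
    rw [e1, e2, e3, ← Complex.ofReal_cpow hx0, ← Complex.ofReal_cpow (by linarith)]
    push_cast
    ring
  have hs : 0 < (a : ℂ).re := by simpa using h0
  have ht : 0 < ((1 : ℂ) - a).re := by simp [Complex.sub_re]; linarith
  have hval := Complex.Gamma_mul_Gamma_eq_betaIntegral hs ht
  rw [add_sub_cancel, Complex.Gamma_one, one_mul, Complex.Gamma_mul_Gamma_one_sub] at hval
  rw [key] at hval
  have : ((π / Real.sin (π * a) : ℝ) : ℂ) =
      ((∫ x in (0:ℝ)..1, x ^ (a-1) * (1-x) ^ (-a) : ℝ) : ℂ) := by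
    rw [← hval]; push_cast; ring_nf
  exact_mod_cast this.symm

/-- `∫ t in Ioi 0, t^(a-1)/(1+t) = π / sin (π a)` for `0 < a < 1`. -/
lemma integral_rpow_div_one_add (a : ℝ) (h0 : 0 < a) (h1 : a < 1) :
    ∫ t in Ioi (0:ℝ), t ^ (a-1) / (1 + t) = π / Real.sin (π * a) := by
  have himg : (fun x : ℝ => x / (1 - x)) '' Ioo 0 1 = Ioi 0 := by
    ext t
    simp only [mem_image, mem_Ioi, mem_Ioo]
    constructor
    · rintro ⟨x, ⟨hx0, hx1⟩, rfl⟩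
      exact div_pos hx0 (by linarith)
    · intro ht
      refine ⟨t / (1 + t), ⟨by positivity, ?_⟩, ?_⟩
      · rw [div_lt_one (by linarith)]; linarith
      · field_simp; ring
  have hderiv : ∀ x ∈ Ioo (0:ℝ) 1, HasDerivWithinAt (fun x : ℝ => x / (1 - x))
      ((1 - x)⁻¹ ^ 2) (Ioo 0 1) x := by
    intro x hx
    obtain ⟨hx0, hx1⟩ := hx
    have h : HasDerivAt (fun x : ℝ => x / (1 - x))
        ((1 * (1 - x) - x * (0 - 1)) / (1 - x) ^ 2) x :=
      (hasDerivAt_id x).div ((hasDerivAt_const x 1).sub (hasDerivAt_id x)) (by intro h; nlinarith)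
    have h1x : (1:ℝ) - x ≠ 0 := by intro h; linarith
    have e : (1 - x)⁻¹ ^ 2 = (1 * (1 - x) - x * (0 - 1)) / (1 - x) ^ 2 := by
      rw [eq_div_iff (pow_ne_zero 2 h1x), inv_pow, inv_mul_cancel₀ (pow_ne_zero 2 h1x)]; ring
    rw [e]; exact h.hasDerivWithinAt
  have hinj : InjOn (fun x : ℝ => x / (1 - x)) (Ioo 0 1) := by
    rintro x ⟨hx0, hx1⟩ y ⟨hy0, hy1⟩ h
    simp only at h
    rw [div_eq_div_iff (by linarith) (by linarith)] at h
    nlinarith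
  have key := integral_image_eq_integral_abs_deriv_smul measurableSet_Ioo hderiv hinj
    (fun t => t ^ (a-1) / (1 + t))
  rw [himg] at key
  rw [key]
  have step : ∫ x in Ioo (0:ℝ) 1, |(1 - x)⁻¹ ^ 2| • ((x / (1-x)) ^ (a-1) / (1 + x / (1-x)))
      = ∫ x in Ioo (0:ℝ) 1, x ^ (a-1) * (1-x) ^ (-a) := by
    refine setIntegral_congr_fun measurableSet_Ioo fun x hx => ?_
    obtain ⟨hx0, hx1⟩ := hx
    have h1x : (0:ℝ) < 1 - x := by linarith
    have hfx : (1:ℝ) + x / (1 - x) = (1 - x)⁻¹ := by field_simp; ring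
    have ea : (1-x) ^ (a-1) = (1-x) ^ a / (1-x) := by
      rw [Real.rpow_sub h1x, Real.rpow_one]
    have ena : (1-x) ^ (-a) = ((1-x) ^ a)⁻¹ := Real.rpow_neg h1x.le a
    have hpa : (0:ℝ) < (1-x) ^ a := Real.rpow_pos_of_pos h1x a
    simp only [smul_eq_mul, hfx]
    rw [div_rpow hx0.le h1x.le, abs_of_nonneg (by positivity), ea, ena]
    field_simp
  rw [step, ← integral_Ioc_eq_integral_Ioo,
    ← intervalIntegral.integral_of_le (by norm_num : (0:ℝ) ≤ 1)]
  exact real_beta_val a h0 h1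

/-- For `α > 2`, `s > 0`, `P > 0`:
`∫₀^∞ 2π r / (1 + r^α/(s P)) dr = π (s P)^(2/α) / sinc (2/α)`. -/
theorem integral_interference_kernel (α s P : ℝ) (hα : 2 < α) (hs : 0 < s) (hP : 0 < P) :
    ∫ r in Set.Ioi (0 : ℝ), 2 * π * r / (1 + r ^ α / (s * P)) =
      π * (s * P) ^ (2 / α) / rsinc (2 / α) := by
  set c : ℝ := s * P with hc
  have hcpos : 0 < c := mul_pos hs hP
  have hαpos : (0:ℝ) < α := by linarith
  set a : ℝ := 2 / α with ha
  have ha0 : 0 < a := by positivity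
  have ha1 : a < 1 := by rw [ha, div_lt_one hαpos]; linarith
  set g : ℝ → ℝ := fun y => (2 * π / α) * (y ^ (a - 1) / (1 + y / c)) with hg
  -- Step A: substitution y = r^α
  have stepA : (∫ r in Ioi (0:ℝ), 2 * π * r / (1 + r ^ α / c)) = ∫ y in Ioi (0:ℝ), g y := by
    rw [← integral_comp_rpow_Ioi_of_pos (g := g) hαpos]
    refine setIntegral_congr_fun measurableSet_Ioi fun x hx => ?_
    have hx0 : (0:ℝ) < x := hx
    have e1 : (x ^ α) ^ (a - 1) = x ^ (α * (a - 1)) := (Real.rpow_mul hx0.le α (a-1)).symm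
    have e2 : α * (a - 1) = 2 - α := by rw [ha]; field_simp
    simp only [g, smul_eq_mul, e1, e2]
    have hden : (0:ℝ) < 1 + x ^ α / c := by positivity
    have epow : x ^ (α-1) * x ^ (2-α) = x := by
      rw [← Real.rpow_add hx0]; norm_num
    have e3 : α * x ^ (α - 1) * (2 * π / α * (x ^ (2 - α) / (1 + x ^ α / c)))
        = 2 * π * (x ^ (α-1) * x ^ (2-α)) / (1 + x ^ α / c) := by
      field_simp
    rw [e3, epow]
  -- Step B: substitution y = c * t
  have stepB : (∫ y in Ioi (0:ℝ), g y)
      = c * ∫ t in Ioi (0:ℝ), ((2 * π / α) * c ^ (a - 1)) * (t ^ (a-1) / (1 + t)) := by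
    have h1 := integral_comp_mul_left_Ioi g 0 hcpos
    rw [mul_zero] at h1
    have h2 : (∫ y in Ioi (0:ℝ), g y) = c * ∫ x in Ioi (0:ℝ), g (c * x) := by
      rw [h1, smul_eq_mul, ← mul_assoc, mul_inv_cancel₀ hcpos.ne', one_mul]
    rw [h2]
    congr 1
    refine setIntegral_congr_fun measurableSet_Ioi fun t ht => ?_
    have ht0 : (0:ℝ) < t := ht
    simp only [g]
    rw [mul_comm c t, mul_div_cancel_right₀ _ hcpos.ne', Real.mul_rpow ht0.le hcpos.le]
    ring
  rw [stepA, stepB, MeasureTheory.integral_const_mul, integral_rpow_div_one_add a ha0 ha1]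
  have hsin : 0 < Real.sin (π * a) :=
    Real.sin_pos_of_pos_of_lt_pi (by positivity) (by nlinarith [pi_pos])
  have hca : c * c ^ (a - 1) = c ^ a := by
    rw [← Real.rpow_one_add' hcpos.le (by linarith : 1 + (a-1) ≠ 0)]
    norm_num
  rw [rsinc]
  rw [div_div_eq_mul_div, div_mul_eq_mul_div, eq_div_iff hsin.ne']
  have h2 : α * a = 2 := by rw [ha]; field_simp
  rw [← hca]
  field_simp
  linarith [h2]
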